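/- arXiv:1403.0872 — 5 statements merged into one kernel-verified Lean document; each statement's English description precedes it below -/
import Mathlib

section
/- For every Hurst parameter H ∈ (0,1], the fractional Brownian motion covariance kernel R is positive semidefinite: for every n ∈ ℕ, all times t_1,…,t_n ∈ [0,∞) and all real numbers a_1,…,a_n, one has Σ_{i=1}^n Σ_{j=1}^n a_i a_j R(t_i,t_j) ≥ 0. -/
open scoped BigOperators

/-- Fractional Brownian motion covariance kernel with Hurst parameter `H`:
`R(s,t) = (s^{2H} + t^{2H} - |t-s|^{2H}) / 2`, with real powers. -/
noncomputable def fbmCov (H s t : ℝ) : ℝ :=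
  (s ^ (2 * H) + t ^ (2 * H) - |t - s| ^ (2 * H)) / 2

section FbmAux

open MeasureTheory Real Set

/-- The integrand of the Lévy–Khinchine-type representation of `|x|^α`. -/
noncomputable def fbmKer (α x u : ℝ) : ℝ := (1 - Real.cos (x * u)) / u ^ (1 + α)

/-- The normalizing constant `∫_0^∞ (1 - cos u)/u^{1+α} du`. -/
noncomputable def fbmI (α : ℝ) : ℝ := ∫ u in Ioi (0:ℝ), fbmKer α 1 u

lemma fbmKer_contOn (α x : ℝ) : ContinuousOn (fbmKer α x) (Ioi 0) := by
  apply ContinuousOn.div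
  · exact (continuous_const.sub (Real.continuous_cos.comp (continuous_const.mul continuous_id))).continuousOn
  · intro u hu
    exact (Real.continuousAt_rpow_const u (1+α) (Or.inl (ne_of_gt hu))).continuousWithinAt
  · intro u hu
    exact (Real.rpow_pos_of_pos hu _).ne'

lemma fbmKer_nonneg (α x : ℝ) {u : ℝ} (hu : 0 < u) : 0 ≤ fbmKer α x u := by
  apply div_nonneg
  · linarith [Real.cos_le_one (x*u)]
  · exact (Real.rpow_pos_of_pos hu _).le

lemma fbmKer_integrableOn (α : ℝ) (hα0 : 0 < α) (hα2 : α < 2) (x : ℝ) :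
    IntegrableOn (fbmKer α x) (Ioi 0) := by
  have hmeas : ∀ s : Set ℝ, MeasurableSet s → s ⊆ Ioi 0 →
      AEStronglyMeasurable (fbmKer α x) (volume.restrict s) := fun s hs hsub =>
    ((fbmKer_contOn α x).mono hsub).aestronglyMeasurable hs
  have h01 : IntegrableOn (fbmKer α x) (Ioc 0 1) := by
    have hbig : IntegrableOn (fun u : ℝ => x^2/2 * u ^ (1 - α)) (Ioc 0 1) := by
      have h := intervalIntegral.intervalIntegrable_rpow' (r := 1 - α) (by linarith) (a := 0) (b := 1)
      rw [intervalIntegrable_iff_integrableOn_Ioc_of_le (by norm_num)] at h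
      exact h.const_mul _
    apply hbig.mono' (hmeas _ measurableSet_Ioc Ioc_subset_Ioi_self)
    filter_upwards [ae_restrict_mem measurableSet_Ioc] with u hu
    obtain ⟨hu0, hu1⟩ := hu
    rw [Real.norm_eq_abs, abs_of_nonneg (fbmKer_nonneg α x hu0), fbmKer,
      div_le_iff₀ (Real.rpow_pos_of_pos hu0 _)]
    have h1 : 1 - Real.cos (x*u) ≤ (x*u)^2/2 := by
      linarith [Real.one_sub_sq_div_two_le_cos (x := x*u)]
    have h2 : x^2/2 * u ^ (1 - α) * u ^ (1 + α) = (x*u)^2/2 := by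
      rw [mul_assoc, ← Real.rpow_add hu0]
      norm_num
      ring
    rw [h2]; exact h1
  have h1i : IntegrableOn (fbmKer α x) (Ioi 1) := by
    have hbig : IntegrableOn (fun u : ℝ => 2 * u ^ (-(1 + α))) (Ioi 1) :=
      (integrableOn_Ioi_rpow_of_lt (by linarith) one_pos).const_mul _
    apply hbig.mono' (hmeas _ measurableSet_Ioi (fun u hu => mem_Ioi.mpr (lt_trans one_pos (mem_Ioi.mp hu))))
    filter_upwards [ae_restrict_mem measurableSet_Ioi] with u hu
    have hu0 : (0:ℝ) < u := lt_trans one_pos hu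
    rw [Real.norm_eq_abs, abs_of_nonneg (fbmKer_nonneg α x hu0), fbmKer,
      Real.rpow_neg hu0.le, div_eq_mul_inv]
    have : 1 - Real.cos (x*u) ≤ 2 := by linarith [Real.neg_one_le_cos (x*u)]
    exact mul_le_mul_of_nonneg_right this (inv_nonneg.mpr (Real.rpow_pos_of_pos hu0 _).le)
  have : Ioc (0:ℝ) 1 ∪ Ioi 1 = Ioi 0 := Ioc_union_Ioi_eq_Ioi (by norm_num)
  rw [← this]
  exact h01.union h1i

lemma fbmKer_integral (α : ℝ) (hα0 : 0 < α) (x : ℝ) :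
    ∫ u in Ioi (0:ℝ), fbmKer α x u = |x| ^ α * fbmI α := by
  rcases eq_or_ne x 0 with rfl | hx
  · simp [fbmKer, Real.zero_rpow (ne_of_gt hα0)]
  · have hc : 0 < |x| := abs_pos.mpr hx
    have hcos : ∀ u, Real.cos (x*u) = Real.cos (|x| * u) := by
      intro u; rcases abs_choice x with h | h
      · rw [h]
      · rw [h, neg_mul, Real.cos_neg]
    calc ∫ u in Ioi (0:ℝ), fbmKer α x u
        = ∫ u in Ioi (0:ℝ), |x|^(1+α) * fbmKer α 1 (|x| * u) := by
          apply setIntegral_congr_fun measurableSet_Ioi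
          intro u hu
          simp only [fbmKer, one_mul, hcos]
          rw [Real.mul_rpow (abs_nonneg x) (le_of_lt hu)]
          have h1 : (u:ℝ) ^ (1+α) ≠ 0 := (Real.rpow_pos_of_pos hu _).ne'
          have h2 : |x| ^ (1+α) ≠ 0 := (Real.rpow_pos_of_pos hc _).ne'
          field_simp
      _ = |x|^(1+α) * (|x|⁻¹ * ∫ u in Ioi (0:ℝ), fbmKer α 1 u) := by
          rw [MeasureTheory.integral_const_mul,
            MeasureTheory.integral_comp_mul_left_Ioi (fbmKer α 1) 0 hc, mul_zero, smul_eq_mul]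
      _ = |x|^α * fbmI α := by
          rw [fbmI, ← mul_assoc]
          congr 1
          rw [Real.rpow_add hc, Real.rpow_one]
          field_simp

lemma fbmI_pos (α : ℝ) (hα0 : 0 < α) (hα2 : α < 2) : 0 < fbmI α := by
  have hint := fbmKer_integrableOn α hα0 hα2 1
  have key : 0 < ∫ u in (1:ℝ)..2, fbmKer α 1 u := by
    apply intervalIntegral.intervalIntegral_pos_of_pos_on
    · apply IntegrableOn.intervalIntegrable
      apply hint.mono_set
      intro u hu
      rw [uIcc_of_le (by norm_num : (1:ℝ) ≤ 2)] at hu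
      exact lt_of_lt_of_le one_pos hu.1
    · intro u hu
      have hu0 : (0:ℝ) < u := lt_trans one_pos hu.1
      simp only [fbmKer, one_mul]
      apply div_pos
      · have : Real.cos u < Real.cos 0 := by
          apply Real.cos_lt_cos_of_nonneg_of_le_pi le_rfl _ hu0
          linarith [Real.pi_gt_three, hu.2]
        rw [Real.cos_zero] at this
        linarith
      · exact Real.rpow_pos_of_pos hu0 _
    · norm_num
  have h12 : ∫ u in (1:ℝ)..2, fbmKer α 1 u ≤ fbmI α := by
    rw [intervalIntegral.integral_of_le (by norm_num : (1:ℝ) ≤ 2)]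
    apply setIntegral_mono_set hint
    · filter_upwards [ae_restrict_mem measurableSet_Ioi] with u hu
      exact fbmKer_nonneg α 1 hu
    · exact HasSubset.Subset.eventuallyLE (fun u hu => lt_trans one_pos hu.1)
  linarith

lemma sum_negdef (α : ℝ) (hα0 : 0 < α) (hα2 : α ≤ 2) (m : ℕ) (s b : Fin m → ℝ)
    (hb : ∑ i, b i = 0) :
    ∑ i : Fin m, ∑ j : Fin m, b i * b j * |s i - s j| ^ α ≤ 0 := by
  rcases eq_or_lt_of_le hα2 with rfl | hα2'
  · -- α = 2 case
    have h2 : ∀ i j : Fin m, b i * b j * |s i - s j| ^ (2:ℝ)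
        = (b i * s i^2) * b j - 2*((b i * s i) * (b j * s j)) + b i * (b j * s j^2) := by
      intro i j
      rw [Real.rpow_two, sq_abs]
      ring
    simp_rw [h2]
    simp only [Finset.sum_add_distrib, Finset.sum_sub_distrib]
    simp_rw [← Finset.mul_sum]
    simp only [hb, mul_zero, Finset.sum_const_zero]
    rw [← Finset.sum_mul, ← Finset.sum_mul, hb]
    nlinarith [sq_nonneg (∑ i : Fin m, b i * s i)]
  · have hIpos := fbmI_pos α hα0 hα2'
    have hptwise : ∀ u ∈ Ioi (0:ℝ),
        (∑ p : Fin m × Fin m, b p.1 * b p.2 * fbmKer α (s p.1 - s p.2) u) ≤ 0 := by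
      intro u hu
      have hden : (0:ℝ) < u ^ (1+α) := Real.rpow_pos_of_pos hu _
      have hterm : ∀ p : Fin m × Fin m, b p.1 * b p.2 * fbmKer α (s p.1 - s p.2) u
          = (b p.1 * b p.2 * (1 - Real.cos ((s p.1 - s p.2) * u))) * (u ^ (1+α))⁻¹ := by
        intro p; rw [fbmKer, div_eq_mul_inv]; ring
      simp_rw [hterm, ← Finset.sum_mul]
      apply mul_nonpos_of_nonpos_of_nonneg _ (inv_nonneg.mpr hden.le)
      have hcos : ∀ p : Fin m × Fin m, b p.1 * b p.2 * (1 - Real.cos ((s p.1 - s p.2) * u))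
          = b p.1 * b p.2 - (b p.1 * Real.cos (s p.1 * u)) * (b p.2 * Real.cos (s p.2 * u))
            - (b p.1 * Real.sin (s p.1 * u)) * (b p.2 * Real.sin (s p.2 * u)) := by
        intro p
        have h : (s p.1 - s p.2) * u = s p.1 * u - s p.2 * u := by ring
        rw [h, Real.cos_sub]
        ring
      simp_rw [hcos]
      rw [Finset.sum_sub_distrib, Finset.sum_sub_distrib]
      simp only [Fintype.sum_prod_type]
      rw [← Fintype.sum_mul_sum, ← Fintype.sum_mul_sum, ← Fintype.sum_mul_sum, hb]
      nlinarith [sq_nonneg (∑ i : Fin m, b i * Real.cos (s i * u)),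
        sq_nonneg (∑ i : Fin m, b i * Real.sin (s i * u))]
    have hterm_eq : ∀ i j : Fin m, b i * b j * |s i - s j| ^ α
        = (fbmI α)⁻¹ * ∫ u in Ioi (0:ℝ), b i * b j * fbmKer α (s i - s j) u := by
      intro i j
      rw [MeasureTheory.integral_const_mul, fbmKer_integral α hα0 (s i - s j)]
      field_simp
    simp_rw [hterm_eq, ← Finset.mul_sum]
    apply mul_nonpos_iff.mpr
    left
    refine ⟨inv_nonneg.mpr hIpos.le, ?_⟩
    have hswap : ∑ i : Fin m, ∑ j : Fin m, ∫ (u : ℝ) in Ioi 0, b i * b j * fbmKer α (s i - s j) u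
        = ∑ p : Fin m × Fin m, ∫ (u : ℝ) in Ioi 0, b p.1 * b p.2 * fbmKer α (s p.1 - s p.2) u :=
      (Fintype.sum_prod_type (f := fun p : Fin m × Fin m =>
        ∫ (u : ℝ) in Ioi 0, b p.1 * b p.2 * fbmKer α (s p.1 - s p.2) u)).symm
    rw [hswap]
    rw [← MeasureTheory.integral_finset_sum Finset.univ
      (fun (p : Fin m × Fin m) _ => (fbmKer_integrableOn α hα0 hα2' (s p.1 - s p.2)).const_mul (b p.1 * b p.2))]
    exact setIntegral_nonpos measurableSet_Ioi hptwise

end FbmAux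

/-- For every Hurst parameter `H ∈ (0,1]`, the fBm covariance kernel is positive
semidefinite: for all times `t₁,…,tₙ ≥ 0` and reals `a₁,…,aₙ`,
`∑ᵢ∑ⱼ aᵢ aⱼ R(tᵢ,tⱼ) ≥ 0`. -/
theorem fbmCov_posSemidef (H : ℝ) (hH0 : 0 < H) (hH1 : H ≤ 1)
    (n : ℕ) (t : Fin n → ℝ) (ht : ∀ i, 0 ≤ t i) (a : Fin n → ℝ) :
    0 ≤ ∑ i : Fin n, ∑ j : Fin n, a i * a j * fbmCov H (t i) (t j) := by
  set α := 2 * H with hα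
  have hα0 : 0 < α := by positivity
  have hα2 : α ≤ 2 := by rw [hα]; linarith
  set S := ∑ i : Fin n, a i with hS
  set P := ∑ i : Fin n, a i * t i ^ α with hP
  set Q := ∑ i : Fin n, ∑ j : Fin n, a i * a j * |t i - t j| ^ α with hQ
  -- negative definiteness with an extra point at 0
  set b : Fin (n+1) → ℝ := Fin.cons (-S) a with hbdef
  set s : Fin (n+1) → ℝ := Fin.cons 0 t with hsdef
  have hb : ∑ i : Fin (n+1), b i = 0 := by
    rw [hbdef, Fin.sum_cons]
    simp [hS]
  have hneg := sum_negdef α hα0 hα2 (n+1) s b hb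
  have habs : ∀ i : Fin n, |t i| ^ α = t i ^ α := by
    intro i; rw [abs_of_nonneg (ht i)]
  have hneg_eq : ∑ i : Fin (n+1), ∑ j : Fin (n+1), b i * b j * |s i - s j| ^ α
      = Q - 2 * (S * P) := by
    rw [Fin.sum_univ_succ]
    simp only [hbdef, hsdef, Fin.cons_zero, Fin.cons_succ, Fin.sum_univ_succ]
    simp only [sub_self, abs_zero, Real.zero_rpow hα0.ne', mul_zero, zero_sub, sub_zero,
      abs_neg, habs]
    rw [Finset.sum_add_distrib]
    have e1 : ∑ x : Fin n, -S * a x * t x ^ α = -(S * P) := by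
      have h : ∀ x : Fin n, -S * a x * t x ^ α = -(S * (a x * t x ^ α)) := fun x => by ring
      rw [Finset.sum_congr rfl fun x _ => h x, Finset.sum_neg_distrib, ← Finset.mul_sum, ← hP]
    have e2 : ∑ x : Fin n, a x * -S * t x ^ α = -(S * P) := by
      have h : ∀ x : Fin n, a x * -S * t x ^ α = -(S * (a x * t x ^ α)) := fun x => by ring
      rw [Finset.sum_congr rfl fun x _ => h x, Finset.sum_neg_distrib, ← Finset.mul_sum, ← hP]
    rw [e1, e2, ← hQ]
    ring
  have hgoal_eq : ∑ i : Fin n, ∑ j : Fin n, a i * a j * fbmCov H (t i) (t j)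
      = (P * S + S * P - Q) / 2 := by
    have hterm : ∀ i j : Fin n, a i * a j * fbmCov H (t i) (t j)
        = ((a i * t i ^ α) * a j + a i * (a j * t j ^ α) - a i * a j * |t i - t j| ^ α) / 2 := by
      intro i j
      rw [fbmCov, abs_sub_comm (t j) (t i), ← hα]
      ring
    simp_rw [hterm]
    simp only [← Finset.sum_div]
    congr 1
    simp only [Finset.sum_add_distrib, Finset.sum_sub_distrib, ← Finset.sum_mul, ← Finset.mul_sum]
    rw [← hP, ← hS, ← hQ]
  rw [hgoal_eq]
  rw [hneg_eq] at hneg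
  linarith
end

section
/- Let H ∈ (0,1/2]. There exists a finite constant C depending only on H such that for all 0 ≤ a < b ≤ 1 and all partitions a = s_0 < s_1 < ⋯ < s_m = b and a = t_0 < t_1 < ⋯ < t_n = b of [a,b], one has Σ_{i=0}^{m−1} Σ_{j=0}^{n−1} |R(s_{i+1},t_{j+1}) − R(s_{i+1},t_j) − R(s_i,t_{j+1}) + R(s_i,t_j)|^{1/(2H)} ≤ C (b−a). In particular the 2D (1/(2H))-variation of R over the square [a,b]×[a,b] is controlled linearly in the side length b−a. -/
open scoped BigOperators

/-- Rectangular increment of the fBm covariance, expressed via absolute values. -/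
noncomputable def fbmXg (p S1 S2 U V : ℝ) : ℝ :=
  (|V - S1| ^ p - |V - S2| ^ p + |U - S2| ^ p - |U - S1| ^ p) / 2

lemma fbmXg_eq (H S1 S2 U V : ℝ) :
    fbmCov H S2 V - fbmCov H S2 U - fbmCov H S1 V + fbmCov H S1 U
      = fbmXg (2 * H) S1 S2 U V := by
  unfold fbmCov fbmXg; ring

lemma fbmXg_swap (p S1 S2 U V : ℝ) : fbmXg p S1 S2 U V = fbmXg p U V S1 S2 := by
  unfold fbmXg
  rw [abs_sub_comm V S1, abs_sub_comm V S2, abs_sub_comm U S2, abs_sub_comm U S1]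
  ring

/-- Quadrilateral inequality from concavity of `x ^ p` for `p ∈ [0,1]`. -/
lemma fbm_quad {p : ℝ} (hp0 : 0 ≤ p) (hp1 : p ≤ 1) {a x d : ℝ}
    (ha : 0 ≤ a) (hax : a ≤ x) (hxd : x ≤ d) :
    a ^ p + d ^ p ≤ x ^ p + (a + d - x) ^ p := by
  rcases eq_or_lt_of_le (hax.trans hxd) with h | h
  · have hxa : x = a := le_antisymm (h ▸ hxd) hax
    have hda : d = a := h.symm
    subst hxa; subst hda; simp
  · have hcon := Real.concaveOn_rpow hp0 hp1
    have hd0 : (0:ℝ) < d - a := by linarith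
    have hlam0 : 0 ≤ (d - x) / (d - a) := div_nonneg (by linarith) hd0.le
    have hmu0 : 0 ≤ (x - a) / (d - a) := div_nonneg (by linarith) hd0.le
    have hsum : (d - x) / (d - a) + (x - a) / (d - a) = 1 := by
      field_simp
      ring
    have hmemA : a ∈ Set.Ici (0:ℝ) := ha
    have hmemD : d ∈ Set.Ici (0:ℝ) := le_trans ha (hax.trans hxd)
    have h1 := hcon.2 hmemA hmemD hlam0 hmu0 hsum
    have h2 := hcon.2 hmemA hmemD hmu0 hlam0 (by linarith)
    simp only [smul_eq_mul] at h1 h2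
    have e1 : (d - x) / (d - a) * a + (x - a) / (d - a) * d = x := by
      field_simp; ring
    have e2 : (x - a) / (d - a) * a + (d - x) / (d - a) * d = a + d - x := by
      field_simp; ring
    rw [e1] at h1; rw [e2] at h2
    calc a ^ p + d ^ p
        = ((d - x) / (d - a) + (x - a) / (d - a)) * (a ^ p + d ^ p) := by
          rw [hsum]; ring
      _ = ((d - x) / (d - a) * a ^ p + (x - a) / (d - a) * d ^ p)
          + ((x - a) / (d - a) * a ^ p + (d - x) / (d - a) * d ^ p) := by ring
      _ ≤ x ^ p + (a + d - x) ^ p := add_le_add h1 h2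

lemma fbmXg_nonneg_nested {p : ℝ} (hp0 : 0 < p) {S1 S2 U V : ℝ}
    (h1 : S1 ≤ U) (h2 : U ≤ V) (h3 : V ≤ S2) : 0 ≤ fbmXg p S1 S2 U V := by
  unfold fbmXg
  rw [abs_sub_comm V S2, abs_sub_comm U S2,
    abs_of_nonneg (by linarith : (0:ℝ) ≤ V - S1),
    abs_of_nonneg (by linarith : (0:ℝ) ≤ S2 - V),
    abs_of_nonneg (by linarith : (0:ℝ) ≤ S2 - U),
    abs_of_nonneg (by linarith : (0:ℝ) ≤ U - S1)]
  have m1 : (U - S1) ^ p ≤ (V - S1) ^ p :=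
    Real.rpow_le_rpow (by linarith) (by linarith) hp0.le
  have m2 : (S2 - V) ^ p ≤ (S2 - U) ^ p :=
    Real.rpow_le_rpow (by linarith) (by linarith) hp0.le
  linarith

lemma fbmXg_nonpos_left {p : ℝ} (hp0 : 0 ≤ p) (hp1 : p ≤ 1) {S1 S2 U V : ℝ}
    (hUV : U ≤ V) (hVS : V ≤ S1) (hS : S1 ≤ S2) : fbmXg p S1 S2 U V ≤ 0 := by
  unfold fbmXg
  rw [abs_sub_comm V S1, abs_sub_comm V S2, abs_sub_comm U S2, abs_sub_comm U S1,
    abs_of_nonneg (by linarith : (0:ℝ) ≤ S1 - V),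
    abs_of_nonneg (by linarith : (0:ℝ) ≤ S2 - V),
    abs_of_nonneg (by linarith : (0:ℝ) ≤ S2 - U),
    abs_of_nonneg (by linarith : (0:ℝ) ≤ S1 - U)]
  have h := fbm_quad hp0 hp1 (a := S1 - V) (x := S1 - U) (d := S2 - U)
    (by linarith) (by linarith) (by linarith)
  have e : S1 - V + (S2 - U) - (S1 - U) = S2 - V := by ring
  rw [e] at h
  linarith

lemma fbmXg_nonpos_right {p : ℝ} (hp0 : 0 ≤ p) (hp1 : p ≤ 1) {S1 S2 U V : ℝ}
    (hS : S1 ≤ S2) (hSU : S2 ≤ U) (hUV : U ≤ V) : fbmXg p S1 S2 U V ≤ 0 := by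
  unfold fbmXg
  rw [abs_of_nonneg (by linarith : (0:ℝ) ≤ V - S1),
    abs_of_nonneg (by linarith : (0:ℝ) ≤ V - S2),
    abs_of_nonneg (by linarith : (0:ℝ) ≤ U - S2),
    abs_of_nonneg (by linarith : (0:ℝ) ≤ U - S1)]
  have h := fbm_quad hp0 hp1 (a := U - S2) (x := U - S1) (d := V - S1)
    (by linarith) (by linarith) (by linarith)
  have e : U - S2 + (V - S1) - (U - S1) = V - S2 := by ring
  rw [e] at h
  linarith

/-- Telescoping sums over `Fin`. -/
lemma fbm_fin_telescope : ∀ {n : ℕ} (F : Fin (n + 1) → ℝ),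
    ∑ j : Fin n, (F j.succ - F j.castSucc) = F (Fin.last n) - F 0 := by
  intro n
  induction n with
  | zero => intro F; simp
  | succ n ih =>
    intro F
    rw [Fin.sum_univ_castSucc]
    have h2 := ih (fun k : Fin (n+1) => F k.castSucc)
    simp only [Fin.succ_castSucc] at h2 ⊢
    rw [h2]
    simp [Fin.succ_last]

lemma fbm_rpow_add_le {x y q : ℝ} (hx : 0 ≤ x) (hy : 0 ≤ y) (hq : 1 ≤ q) :
    x ^ q + y ^ q ≤ (x + y) ^ q := by
  have h := NNReal.add_rpow_le_rpow_add (Real.toNNReal x) (Real.toNNReal y) hq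
  have h2 := (NNReal.coe_le_coe).2 h
  push_cast at h2
  rwa [Real.coe_toNNReal _ hx, Real.coe_toNNReal _ hy] at h2

lemma fbm_sum_rpow_le {ι : Type*} (s : Finset ι) (f : ι → ℝ) {q : ℝ}
    (hq : 1 ≤ q) (hf : ∀ i ∈ s, 0 ≤ f i) :
    ∑ i ∈ s, f i ^ q ≤ (∑ i ∈ s, f i) ^ q := by
  induction s using Finset.cons_induction with
  | empty => simp [Real.zero_rpow (by linarith : q ≠ 0)]
  | cons a s ha ih =>
    rw [Finset.sum_cons, Finset.sum_cons]
    have hfa : 0 ≤ f a := hf a (Finset.mem_cons_self a s)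
    have hfs : ∀ i ∈ s, 0 ≤ f i := fun i hi => hf i (Finset.mem_cons_of_mem hi)
    have h1 := ih hfs
    have h2 : 0 ≤ ∑ i ∈ s, f i := Finset.sum_nonneg hfs
    calc f a ^ q + ∑ i ∈ s, f i ^ q ≤ f a ^ q + (∑ i ∈ s, f i) ^ q := by linarith
      _ ≤ (f a + ∑ i ∈ s, f i) ^ q := fbm_rpow_add_le hfa h2 hq

/-- Key one-row estimate: for a fixed interval `[S1, S2] ⊆ [a, b]` and a partition of
`[a,b]`, the row sum of absolute rectangular increments is at most `2 (S2 - S1)^p`. -/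
lemma fbm_row_bound {p : ℝ} (hp0 : 0 < p) (hp1 : p ≤ 1) {a b S1 S2 : ℝ}
    (haS : a ≤ S1) (hS : S1 ≤ S2) (hSb : S2 ≤ b)
    {n : ℕ} (t : Fin (n + 1) → ℝ) (htm : Monotone t)
    (ht0 : t 0 = a) (htl : t (Fin.last n) = b) :
    ∑ j : Fin n, |fbmXg p S1 S2 (t j.castSucc) (t j.succ)| ≤ 2 * (S2 - S1) ^ p := by
  set psi : ℝ → ℝ := fun x => (|x - S1| ^ p - |x - S2| ^ p) / 2 with hpsi
  have hXg : ∀ U V : ℝ, fbmXg p S1 S2 U V = psi V - psi U := by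
    intro U V; unfold fbmXg; simp only [hpsi]; ring
  set L : ℝ → ℝ := fun x => min x S1 with hL
  set M : ℝ → ℝ := fun x => max S1 (min x S2) with hM
  set R : ℝ → ℝ := fun x => max x S2 with hR
  have hsplit : ∀ x : ℝ, psi x = psi (L x) + psi (M x) + psi (R x) - psi S1 - psi S2 := by
    intro x
    rcases le_total x S1 with h1 | h1
    · have e1 : L x = x := min_eq_left h1
      have e2 : M x = S1 := by
        simp only [hM]; rw [min_eq_left (h1.trans hS), max_eq_left h1]
      have e3 : R x = S2 := max_eq_right (h1.trans hS)
      rw [e1, e2, e3]; ring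
    · rcases le_total x S2 with h2 | h2
      · have e1 : L x = S1 := min_eq_right h1
        have e2 : M x = x := by
          simp only [hM]; rw [min_eq_left h2, max_eq_right h1]
        have e3 : R x = S2 := max_eq_right h2
        rw [e1, e2, e3]; ring
      · have e1 : L x = S1 := min_eq_right (hS.trans h2)
        have e2 : M x = S2 := by
          simp only [hM]; rw [min_eq_right h2, max_eq_right hS]
        have e3 : R x = x := max_eq_left h2
        rw [e1, e2, e3]; ring
  have hstep : ∀ j : Fin n, t j.castSucc ≤ t j.succ :=
    fun j => htm (Fin.castSucc_lt_succ : j.castSucc < j.succ).le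
  -- per-term bound
  have hterm : ∀ j : Fin n,
      |fbmXg p S1 S2 (t j.castSucc) (t j.succ)|
        ≤ -(fbmXg p S1 S2 (L (t j.castSucc)) (L (t j.succ)))
          + fbmXg p S1 S2 (M (t j.castSucc)) (M (t j.succ))
          - fbmXg p S1 S2 (R (t j.castSucc)) (R (t j.succ)) := by
    intro j
    set u := t j.castSucc with hu
    set v := t j.succ with hv
    have huv : u ≤ v := hstep j
    have hA : fbmXg p S1 S2 (L u) (L v) ≤ 0 :=
      fbmXg_nonpos_left hp0.le hp1 (min_le_min huv le_rfl) (min_le_right _ _) hS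
    have hB : 0 ≤ fbmXg p S1 S2 (M u) (M v) :=
      fbmXg_nonneg_nested hp0 (le_max_left _ _)
        (max_le_max le_rfl (min_le_min huv le_rfl))
        (max_le hS (min_le_right _ _))
    have hC : fbmXg p S1 S2 (R u) (R v) ≤ 0 :=
      fbmXg_nonpos_right hp0.le hp1 hS (le_max_right _ _) (max_le_max huv le_rfl)
    have hdecomp : fbmXg p S1 S2 u v
        = fbmXg p S1 S2 (L u) (L v) + fbmXg p S1 S2 (M u) (M v)
          + fbmXg p S1 S2 (R u) (R v) := by
      rw [hXg u v, hXg (L u) (L v), hXg (M u) (M v), hXg (R u) (R v),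
        hsplit u, hsplit v]
      ring
    rw [hdecomp]
    have h3 := abs_add_three (fbmXg p S1 S2 (L u) (L v))
      (fbmXg p S1 S2 (M u) (M v)) (fbmXg p S1 S2 (R u) (R v))
    rw [abs_of_nonpos hA, abs_of_nonneg hB, abs_of_nonpos hC] at h3
    linarith
  -- telescoped sums
  have hsumA : ∑ j : Fin n, fbmXg p S1 S2 (L (t j.castSucc)) (L (t j.succ))
      = psi S1 - psi a := by
    calc ∑ j : Fin n, fbmXg p S1 S2 (L (t j.castSucc)) (L (t j.succ))
        = ∑ j : Fin n, ((fun k : Fin (n+1) => psi (L (t k))) j.succ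
            - (fun k : Fin (n+1) => psi (L (t k))) j.castSucc) := by
          refine Finset.sum_congr rfl fun j _ => ?_
          rw [hXg]
      _ = psi (L (t (Fin.last n))) - psi (L (t 0)) := by
          exact fbm_fin_telescope (fun k : Fin (n+1) => psi (L (t k)))
      _ = psi S1 - psi a := by
          rw [htl, ht0]
          simp only [hL]
          rw [min_eq_right (hS.trans hSb), min_eq_left haS]
  have hsumB : ∑ j : Fin n, fbmXg p S1 S2 (M (t j.castSucc)) (M (t j.succ))
      = psi S2 - psi S1 := by
    calc ∑ j : Fin n, fbmXg p S1 S2 (M (t j.castSucc)) (M (t j.succ))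
        = ∑ j : Fin n, ((fun k : Fin (n+1) => psi (M (t k))) j.succ
            - (fun k : Fin (n+1) => psi (M (t k))) j.castSucc) := by
          refine Finset.sum_congr rfl fun j _ => ?_
          rw [hXg]
      _ = psi (M (t (Fin.last n))) - psi (M (t 0)) := by
          exact fbm_fin_telescope (fun k : Fin (n+1) => psi (M (t k)))
      _ = psi S2 - psi S1 := by
          rw [htl, ht0]
          simp only [hM]
          rw [min_eq_right hSb, max_eq_right hS, min_eq_left (haS.trans hS),
            max_eq_left haS]
  have hsumC : ∑ j : Fin n, fbmXg p S1 S2 (R (t j.castSucc)) (R (t j.succ))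
      = psi b - psi S2 := by
    calc ∑ j : Fin n, fbmXg p S1 S2 (R (t j.castSucc)) (R (t j.succ))
        = ∑ j : Fin n, ((fun k : Fin (n+1) => psi (R (t k))) j.succ
            - (fun k : Fin (n+1) => psi (R (t k))) j.castSucc) := by
          refine Finset.sum_congr rfl fun j _ => ?_
          rw [hXg]
      _ = psi (R (t (Fin.last n))) - psi (R (t 0)) := by
          exact fbm_fin_telescope (fun k : Fin (n+1) => psi (R (t k)))
      _ = psi b - psi S2 := by
          rw [htl, ht0]
          simp only [hR]
          rw [max_eq_left hSb, max_eq_right (haS.trans hS)]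
  have hfull : 0 ≤ psi b - psi a := by
    have h0 : 0 ≤ fbmXg p S1 S2 a b := by
      rw [fbmXg_swap]
      exact fbmXg_nonneg_nested hp0 haS hS hSb
    rwa [hXg a b] at h0
  have hSS : psi S2 - psi S1 = (S2 - S1) ^ p := by
    have h0 : fbmXg p S1 S2 S1 S2 = (S2 - S1) ^ p := by
      unfold fbmXg
      simp only [sub_self, abs_zero, Real.zero_rpow hp0.ne']
      rw [abs_sub_comm S1 S2, abs_of_nonneg (by linarith : (0:ℝ) ≤ S2 - S1)]
      ring
    rw [← h0, hXg]
  calc ∑ j : Fin n, |fbmXg p S1 S2 (t j.castSucc) (t j.succ)|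
      ≤ ∑ j : Fin n,
          (-(fbmXg p S1 S2 (L (t j.castSucc)) (L (t j.succ)))
            + fbmXg p S1 S2 (M (t j.castSucc)) (M (t j.succ))
            - fbmXg p S1 S2 (R (t j.castSucc)) (R (t j.succ))) :=
        Finset.sum_le_sum fun j _ => hterm j
    _ = -(psi S1 - psi a) + (psi S2 - psi S1) - (psi b - psi S2) := by
        rw [Finset.sum_sub_distrib, Finset.sum_add_distrib, Finset.sum_neg_distrib,
          hsumA, hsumB, hsumC]
    _ ≤ 2 * (S2 - S1) ^ p := by
        linarith [hfull, hSS]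

/-- For `H ∈ (0, 1/2]` there is a finite constant `C = C(H)` such that for all
`0 ≤ a < b ≤ 1` and all partitions `a = s₀ < ⋯ < s_m = b`, `a = t₀ < ⋯ < t_n = b`,
`∑ᵢ∑ⱼ |R(s_{i+1},t_{j+1}) − R(s_{i+1},t_j) − R(s_i,t_{j+1}) + R(s_i,t_j)|^{1/(2H)}
  ≤ C (b − a)`. -/
theorem fbmCov_2d_variation_control (H : ℝ) (hH0 : 0 < H) (hH : H ≤ 1 / 2) :
    ∃ C : ℝ, ∀ (a b : ℝ), 0 ≤ a → a < b → b ≤ 1 →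
      ∀ (m n : ℕ) (s : Fin (m + 1) → ℝ) (t : Fin (n + 1) → ℝ),
        StrictMono s → s 0 = a → s (Fin.last m) = b →
        StrictMono t → t 0 = a → t (Fin.last n) = b →
        ∑ i : Fin m, ∑ j : Fin n,
            |fbmCov H (s i.succ) (t j.succ) - fbmCov H (s i.succ) (t j.castSucc)
              - fbmCov H (s i.castSucc) (t j.succ)
              + fbmCov H (s i.castSucc) (t j.castSucc)| ^ (1 / (2 * H))
          ≤ C * (b - a) := by
  have hp0 : 0 < 2 * H := by linarith
  have hp1 : 2 * H ≤ 1 := by linarith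
  have hq1 : 1 ≤ 1 / (2 * H) := by
    rw [le_div_iff₀ hp0]; linarith
  refine ⟨(2:ℝ) ^ (1 / (2 * H)), ?_⟩
  intro a b ha0 hab hb1 m n s t hs hs0 hsl ht ht0 htl
  have hsa : ∀ i : Fin (m + 1), a ≤ s i := fun i => hs0 ▸ hs.monotone (Fin.zero_le i)
  have hsb : ∀ i : Fin (m + 1), s i ≤ b := fun i => hsl ▸ hs.monotone (Fin.le_last i)
  -- rewrite the summand via fbmXg
  have hrw : ∀ (i : Fin m) (j : Fin n),
      fbmCov H (s i.succ) (t j.succ) - fbmCov H (s i.succ) (t j.castSucc)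
        - fbmCov H (s i.castSucc) (t j.succ) + fbmCov H (s i.castSucc) (t j.castSucc)
      = fbmXg (2 * H) (s i.castSucc) (s i.succ) (t j.castSucc) (t j.succ) :=
    fun i j => fbmXg_eq H _ _ _ _
  have key : ∀ i : Fin m,
      ∑ j : Fin n,
        |fbmCov H (s i.succ) (t j.succ) - fbmCov H (s i.succ) (t j.castSucc)
          - fbmCov H (s i.castSucc) (t j.succ)
          + fbmCov H (s i.castSucc) (t j.castSucc)| ^ (1 / (2 * H))
      ≤ (2:ℝ) ^ (1 / (2 * H)) * (s i.succ - s i.castSucc) := by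
    intro i
    have hrow : ∑ j : Fin n,
        |fbmXg (2 * H) (s i.castSucc) (s i.succ) (t j.castSucc) (t j.succ)|
        ≤ 2 * (s i.succ - s i.castSucc) ^ (2 * H) :=
      fbm_row_bound hp0 hp1 (hsa i.castSucc) (hs (Fin.castSucc_lt_succ : i.castSucc < i.succ)).le
        (hsb i.succ) t ht.monotone ht0 htl
    have hΔ : 0 ≤ s i.succ - s i.castSucc := by
      have := (hs (Fin.castSucc_lt_succ : i.castSucc < i.succ)).le; linarith
    calc ∑ j : Fin n,
          |fbmCov H (s i.succ) (t j.succ) - fbmCov H (s i.succ) (t j.castSucc)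
            - fbmCov H (s i.castSucc) (t j.succ)
            + fbmCov H (s i.castSucc) (t j.castSucc)| ^ (1 / (2 * H))
        = ∑ j : Fin n,
          |fbmXg (2 * H) (s i.castSucc) (s i.succ) (t j.castSucc) (t j.succ)|
            ^ (1 / (2 * H)) := by
          refine Finset.sum_congr rfl fun j _ => ?_
          rw [hrw i j]
      _ ≤ (∑ j : Fin n,
          |fbmXg (2 * H) (s i.castSucc) (s i.succ) (t j.castSucc) (t j.succ)|)
            ^ (1 / (2 * H)) :=
          fbm_sum_rpow_le _ _ hq1 (fun j _ => abs_nonneg _)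
      _ ≤ (2 * (s i.succ - s i.castSucc) ^ (2 * H)) ^ (1 / (2 * H)) :=
          Real.rpow_le_rpow (Finset.sum_nonneg fun j _ => abs_nonneg _) hrow
            (by positivity)
      _ = (2:ℝ) ^ (1 / (2 * H)) * (s i.succ - s i.castSucc) := by
          rw [Real.mul_rpow (by norm_num) (Real.rpow_nonneg hΔ _),
            ← Real.rpow_mul hΔ]
          have he : 2 * H * (1 / (2 * H)) = 1 := by field_simp
          rw [he, Real.rpow_one]
  calc ∑ i : Fin m, ∑ j : Fin n,
        |fbmCov H (s i.succ) (t j.succ) - fbmCov H (s i.succ) (t j.castSucc)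
          - fbmCov H (s i.castSucc) (t j.succ)
          + fbmCov H (s i.castSucc) (t j.castSucc)| ^ (1 / (2 * H))
      ≤ ∑ i : Fin m, (2:ℝ) ^ (1 / (2 * H)) * (s i.succ - s i.castSucc) :=
        Finset.sum_le_sum fun i _ => key i
    _ = (2:ℝ) ^ (1 / (2 * H)) * (b - a) := by
        rw [← Finset.mul_sum, fbm_fin_telescope s, hsl, hs0]
end

section
/- (Proposition 2.1, rough regime.) Let H ∈ (0,1/2] and ρ ≥ 1/(2H). Then the two-dimensional ρ-variation of the fractional Brownian covariance R on [0,1]² is finite: there exists M < ∞ such that for all partitions 0 = s_0 < s_1 < ⋯ < s_m = 1 and 0 = t_0 < t_1 < ⋯ < t_n = 1 of [0,1], Σ_{i=0}^{m−1} Σ_{j=0}^{n−1} |R(s_{i+1},t_{j+1}) − R(s_{i+1},t_j) − R(s_i,t_{j+1}) + R(s_i,t_j)|^{ρ} ≤ M. -/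
open scoped BigOperators

namespace FbmAux

open Real Set Finset
open scoped NNReal

/-- The function `x ↦ |x-s|^p - |x-s'|^p`, whose increments give rectangular
increments of the fBm covariance. -/
noncomputable def psi (p s s' x : ℝ) : ℝ := |x - s| ^ p - |x - s'| ^ p

/-- The running total-variation majorant of `psi`. -/
noncomputable def phi (p s s' x : ℝ) : ℝ :=
  -psi p s s' (min x s) + psi p s s' (min (max x s) s') - psi p s s' (max x s')

lemma key_ineq {p : ℝ} (hp0 : 0 < p) (hp1 : p ≤ 1) {a b δ : ℝ}
    (ha : 0 ≤ a) (hab : a ≤ b) (hδ : 0 ≤ δ) :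
    (b + δ) ^ p - b ^ p ≤ (a + δ) ^ p - a ^ p := by
  have hb : 0 ≤ b := ha.trans hab
  have hderiv : ∀ x : ℝ, 0 < x →
      HasDerivAt (fun x : ℝ => (x + δ) ^ p - x ^ p)
        (p * (x + δ) ^ (p - 1) * 1 - p * x ^ (p - 1)) x := by
    intro x hx
    have h1 : HasDerivAt (fun x : ℝ => (x + δ) ^ p) (p * (x + δ) ^ (p - 1) * 1) x := by
      have hne : x + δ ≠ 0 := by positivity
      have := (Real.hasDerivAt_rpow_const (p := p) (Or.inl hne)).comp x
        ((hasDerivAt_id x).add_const δ)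
      simpa [Function.comp_def] using this
    have h2 : HasDerivAt (fun x : ℝ => x ^ p) (p * x ^ (p - 1)) x :=
      Real.hasDerivAt_rpow_const (Or.inl hx.ne')
    exact h1.sub h2
  have hanti : AntitoneOn (fun x : ℝ => (x + δ) ^ p - x ^ p) (Ici 0) := by
    apply antitoneOn_of_deriv_nonpos (convex_Ici 0)
    · apply Continuous.continuousOn
      exact ((continuous_id.add continuous_const).rpow_const
          (fun x => Or.inr hp0.le)).sub
        (continuous_id.rpow_const (fun x => Or.inr hp0.le))
    · intro x hx
      rw [interior_Ici] at hx
      exact (hderiv x hx).differentiableAt.differentiableWithinAt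
    · intro x hx
      rw [interior_Ici] at hx
      rw [(hderiv x hx).deriv]
      have hle : (x + δ) ^ (p - 1) ≤ x ^ (p - 1) :=
        Real.rpow_le_rpow_of_nonpos hx (by linarith) (by linarith)
      have := mul_le_mul_of_nonneg_left hle hp0.le
      linarith
  simpa using hanti (mem_Ici.2 ha) (mem_Ici.2 hb) hab

lemma psi_anti_left {p s s' x y : ℝ} (hp0 : 0 < p) (hp1 : p ≤ 1)
    (hss' : s ≤ s') (hxy : x ≤ y) (hys : y ≤ s) :
    psi p s s' y ≤ psi p s s' x := by
  have hxs : x ≤ s := hxy.trans hys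
  have key := key_ineq hp0 hp1 (a := s - y) (b := s' - y) (δ := y - x)
    (by linarith) (by linarith) (by linarith)
  have e1 : s' - y + (y - x) = s' - x := by ring
  have e2 : s - y + (y - x) = s - x := by ring
  rw [e1, e2] at key
  rw [psi, psi, abs_of_nonpos (by linarith : y - s ≤ 0),
    abs_of_nonpos (by linarith : y - s' ≤ 0),
    abs_of_nonpos (by linarith : x - s ≤ 0),
    abs_of_nonpos (by linarith : x - s' ≤ 0), neg_sub, neg_sub, neg_sub, neg_sub]
  linarith

lemma psi_mono_mid {p s s' x y : ℝ} (hp0 : 0 < p)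
    (hsx : s ≤ x) (hxy : x ≤ y) (hys' : y ≤ s') :
    psi p s s' x ≤ psi p s s' y := by
  rw [psi, psi, abs_of_nonneg (by linarith : 0 ≤ x - s),
    abs_of_nonneg (by linarith : 0 ≤ y - s),
    abs_of_nonpos (by linarith : x - s' ≤ 0),
    abs_of_nonpos (by linarith : y - s' ≤ 0), neg_sub, neg_sub]
  have h1 : (x - s) ^ p ≤ (y - s) ^ p :=
    Real.rpow_le_rpow (by linarith) (by linarith) hp0.le
  have h2 : (s' - y) ^ p ≤ (s' - x) ^ p :=
    Real.rpow_le_rpow (by linarith) (by linarith) hp0.le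
  linarith

lemma psi_anti_right {p s s' x y : ℝ} (hp0 : 0 < p) (hp1 : p ≤ 1)
    (hss' : s ≤ s') (hs'x : s' ≤ x) (hxy : x ≤ y) :
    psi p s s' y ≤ psi p s s' x := by
  have key := key_ineq hp0 hp1 (a := x - s') (b := x - s) (δ := y - x)
    (by linarith) (by linarith) (by linarith)
  have e1 : x - s + (y - x) = y - s := by ring
  have e2 : x - s' + (y - x) = y - s' := by ring
  rw [e1, e2] at key
  rw [psi, psi, abs_of_nonneg (by linarith : 0 ≤ y - s),
    abs_of_nonneg (by linarith : 0 ≤ y - s'),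
    abs_of_nonneg (by linarith : 0 ≤ x - s),
    abs_of_nonneg (by linarith : 0 ≤ x - s')]
  linarith

lemma abs_psi_le {p s s' x y : ℝ} (hp0 : 0 < p) (hp1 : p ≤ 1)
    (hss' : s ≤ s') (hxy : x ≤ y) :
    |psi p s s' y - psi p s s' x| ≤ phi p s s' y - phi p s s' x := by
  have T1 : psi p s s' (min y s) ≤ psi p s s' (min x s) :=
    psi_anti_left hp0 hp1 hss' (min_le_min hxy le_rfl) (min_le_right y s)
  have T2 : psi p s s' (min (max x s) s') ≤ psi p s s' (min (max y s) s') :=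
    psi_mono_mid hp0 (le_min (le_max_right x s) hss')
      (min_le_min (max_le_max hxy le_rfl) le_rfl) (min_le_right _ _)
  have T3 : psi p s s' (max y s') ≤ psi p s s' (max x s') :=
    psi_anti_right hp0 hp1 hss' (le_max_right x s') (max_le_max hxy le_rfl)
  have hid : psi p s s' y - psi p s s' x
      = (psi p s s' (min y s) - psi p s s' (min x s))
        + (psi p s s' (min (max y s) s') - psi p s s' (min (max x s) s'))
        + (psi p s s' (max y s') - psi p s s' (max x s')) := by
    simp only [min_def, max_def]
    split_ifs <;> linarith
  rw [abs_le, phi, phi]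
  constructor <;> linarith

lemma phi_diff {p s s' : ℝ} (hp0 : 0 < p) (h0 : 0 ≤ s) (hss' : s ≤ s') (h1 : s' ≤ 1) :
    phi p s s' 1 - phi p s s' 0 ≤ 4 * (s' - s) ^ p := by
  have hs1 : s ≤ 1 := hss'.trans h1
  have h0s' : 0 ≤ s' := h0.trans hss'
  rw [phi, phi, min_eq_left h0, max_eq_right h0, min_eq_left hss', max_eq_right h0s',
    min_eq_right hs1, max_eq_left hs1, min_eq_right h1, max_eq_left h1]
  have hvs : psi p s s' s = -(s' - s) ^ p := by
    rw [psi, sub_self, abs_zero, Real.zero_rpow hp0.ne',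
      abs_of_nonpos (by linarith : s - s' ≤ 0), neg_sub]
    ring
  have hvs' : psi p s s' s' = (s' - s) ^ p := by
    rw [psi, sub_self, abs_zero, Real.zero_rpow hp0.ne',
      abs_of_nonneg (by linarith : 0 ≤ s' - s)]
    ring
  have hv0 : psi p s s' 0 ≤ 0 := by
    rw [psi, zero_sub, zero_sub, abs_neg, abs_neg, abs_of_nonneg h0, abs_of_nonneg h0s',
      sub_nonpos]
    exact Real.rpow_le_rpow h0 hss' hp0.le
  have hv1 : 0 ≤ psi p s s' 1 := by
    rw [psi, abs_of_nonneg (by linarith : (0:ℝ) ≤ 1 - s),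
      abs_of_nonneg (by linarith : (0:ℝ) ≤ 1 - s'), sub_nonneg]
    exact Real.rpow_le_rpow (by linarith) (by linarith) hp0.le
  rw [hvs, hvs']
  linarith

/-- Telescoping sum over a `Fin` partition. -/
lemma fin_telescope {M : Type*} [AddCommGroup M] {n : ℕ} (f : Fin (n + 1) → M) :
    ∑ j : Fin n, (f j.succ - f j.castSucc) = f (Fin.last n) - f 0 := by
  set F : ℕ → M := fun k => f ⟨min k n, Nat.lt_succ_of_le (min_le_right _ _)⟩ with hFdef
  have h1 : ∀ j : Fin n, f j.succ - f j.castSucc = F (↑j + 1) - F ↑j := by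
    intro j
    have e1 : F (↑j + 1) = f j.succ := by
      apply congrArg f
      exact Fin.ext (by simp [F, Nat.min_eq_left (Nat.succ_le_of_lt j.isLt)])
    have e2 : F ↑j = f j.castSucc := by
      apply congrArg f
      exact Fin.ext (by simp [F, Nat.min_eq_left (le_of_lt j.isLt)])
    rw [e1, e2]
  calc ∑ j : Fin n, (f j.succ - f j.castSucc)
      = ∑ j : Fin n, (F (↑j + 1) - F ↑j) := Finset.sum_congr rfl fun j _ => h1 j
    _ = ∑ k ∈ Finset.range n, (F (k + 1) - F k) :=
        Fin.sum_univ_eq_sum_range (fun k => F (k + 1) - F k) n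
    _ = F n - F 0 := Finset.sum_range_sub F n
    _ = f (Fin.last n) - f 0 := by
        congr 1
        · exact congrArg f (Fin.ext (by simp [F, Fin.last]))

lemma row_bound {p s s' : ℝ} (hp0 : 0 < p) (hp1 : p ≤ 1)
    (h0 : 0 ≤ s) (hss' : s ≤ s') (h1 : s' ≤ 1)
    {n : ℕ} (t : Fin (n + 1) → ℝ) (ht : Monotone t)
    (ht0 : t 0 = 0) (ht1 : t (Fin.last n) = 1) :
    ∑ j : Fin n, |psi p s s' (t j.succ) - psi p s s' (t j.castSucc)|
      ≤ 4 * (s' - s) ^ p := by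
  calc ∑ j : Fin n, |psi p s s' (t j.succ) - psi p s s' (t j.castSucc)|
      ≤ ∑ j : Fin n, (phi p s s' (t j.succ) - phi p s s' (t j.castSucc)) :=
        Finset.sum_le_sum fun j _ =>
          abs_psi_le hp0 hp1 hss' (ht (Fin.castSucc_lt_succ (i := j)).le)
    _ = phi p s s' (t (Fin.last n)) - phi p s s' (t 0) :=
        fin_telescope (fun k => phi p s s' (t k))
    _ ≤ 4 * (s' - s) ^ p := by rw [ht0, ht1]; exact phi_diff hp0 h0 hss' h1

lemma real_add_rpow {x y ρ : ℝ} (hx : 0 ≤ x) (hy : 0 ≤ y) (hρ : 1 ≤ ρ) :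
    x ^ ρ + y ^ ρ ≤ (x + y) ^ ρ := by
  have h := NNReal.add_rpow_le_rpow_add (⟨x, hx⟩ : ℝ≥0) ⟨y, hy⟩ hρ
  rw [← NNReal.coe_le_coe] at h
  push_cast at h
  exact h

lemma sum_rpow_le_rpow_sum {ι : Type*} {ρ : ℝ} (hρ : 1 ≤ ρ) (s : Finset ι) (f : ι → ℝ)
    (hf : ∀ i ∈ s, 0 ≤ f i) :
    ∑ i ∈ s, f i ^ ρ ≤ (∑ i ∈ s, f i) ^ ρ := by
  classical
  induction s using Finset.cons_induction with
  | empty => simp [Real.zero_rpow (one_pos.trans_le hρ).ne']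
  | cons a s ha ih =>
    rw [Finset.sum_cons, Finset.sum_cons]
    have hfa : 0 ≤ f a := hf a (Finset.mem_cons_self a s)
    have hfs : 0 ≤ ∑ i ∈ s, f i :=
      Finset.sum_nonneg fun i hi => hf i (Finset.mem_cons_of_mem hi)
    have h1 := ih fun i hi => hf i (Finset.mem_cons_of_mem hi)
    have h2 := real_add_rpow hfa hfs hρ
    linarith

lemma cov_inc (H a b u v : ℝ) :
    fbmCov H b v - fbmCov H b u - fbmCov H a v + fbmCov H a u
      = (psi (2 * H) a b v - psi (2 * H) a b u) / 2 := by
  simp only [fbmCov, psi]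
  ring

end FbmAux

open FbmAux in
/-- (Proposition 2.1, rough regime.) For `H ∈ (0,1/2]` and `ρ ≥ 1/(2H)`, the
two-dimensional `ρ`-variation of the fBm covariance on `[0,1]²` is finite: there is
`M < ∞` bounding `∑ᵢ∑ⱼ |R(s_{i+1},t_{j+1}) − R(s_{i+1},t_j) − R(s_i,t_{j+1}) + R(s_i,t_j)|^ρ`
over all pairs of partitions `0 = s₀ < ⋯ < s_m = 1`, `0 = t₀ < ⋯ < t_n = 1`. -/
theorem fbmCov_2d_rho_variation_finite (H : ℝ) (hH0 : 0 < H) (hH : H ≤ 1 / 2)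
    (ρ : ℝ) (hρ : 1 / (2 * H) ≤ ρ) :
    ∃ M : ℝ, ∀ (m n : ℕ) (s : Fin (m + 1) → ℝ) (t : Fin (n + 1) → ℝ),
      StrictMono s → s 0 = 0 → s (Fin.last m) = 1 →
      StrictMono t → t 0 = 0 → t (Fin.last n) = 1 →
      ∑ i : Fin m, ∑ j : Fin n,
          |fbmCov H (s i.succ) (t j.succ) - fbmCov H (s i.succ) (t j.castSucc)
            - fbmCov H (s i.castSucc) (t j.succ)
            + fbmCov H (s i.castSucc) (t j.castSucc)| ^ ρ
        ≤ M := by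
  have hp0 : (0:ℝ) < 2 * H := by positivity
  have hp1 : 2 * H ≤ 1 := by linarith
  have hρ1 : 1 ≤ ρ := by
    refine le_trans ?_ hρ
    rw [le_div_iff₀ hp0]
    linarith
  have hpρ : 1 ≤ 2 * H * ρ := by
    rw [div_le_iff₀ hp0] at hρ
    linarith
  have h2ρ : (0:ℝ) ≤ (2:ℝ) ^ ρ := Real.rpow_nonneg (by norm_num) ρ
  refine ⟨(2:ℝ) ^ ρ, ?_⟩
  intro m n s t hs hs0 hs1 ht ht0 ht1
  have hrow : ∀ i : Fin m,
      ∑ j : Fin n,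
          |fbmCov H (s i.succ) (t j.succ) - fbmCov H (s i.succ) (t j.castSucc)
            - fbmCov H (s i.castSucc) (t j.succ)
            + fbmCov H (s i.castSucc) (t j.castSucc)| ^ ρ
        ≤ (2:ℝ) ^ ρ * (s i.succ - s i.castSucc) := by
    intro i
    set a := s i.castSucc with ha
    set b := s i.succ with hb
    have hab : a < b := hs (Fin.castSucc_lt_succ (i := i))
    have ha0 : 0 ≤ a := by rw [← hs0]; exact hs.monotone (Fin.zero_le _)
    have hb1 : b ≤ 1 := by rw [← hs1]; exact hs.monotone (Fin.le_last _)
    have hD : ∀ j : Fin n,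
        |fbmCov H b (t j.succ) - fbmCov H b (t j.castSucc)
          - fbmCov H a (t j.succ) + fbmCov H a (t j.castSucc)|
        = |psi (2 * H) a b (t j.succ) - psi (2 * H) a b (t j.castSucc)| / 2 := by
      intro j
      rw [cov_inc, abs_div]
      norm_num
    have hsum : ∑ j : Fin n,
        |fbmCov H b (t j.succ) - fbmCov H b (t j.castSucc)
          - fbmCov H a (t j.succ) + fbmCov H a (t j.castSucc)|
        ≤ 2 * (b - a) ^ (2 * H) := by
      have hr := row_bound hp0 hp1 ha0 hab.le hb1 t ht.monotone ht0 ht1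
      calc ∑ j : Fin n, |fbmCov H b (t j.succ) - fbmCov H b (t j.castSucc)
            - fbmCov H a (t j.succ) + fbmCov H a (t j.castSucc)|
          = ∑ j : Fin n,
              |psi (2 * H) a b (t j.succ) - psi (2 * H) a b (t j.castSucc)| / 2 :=
            Finset.sum_congr rfl fun j _ => hD j
        _ = (∑ j : Fin n,
              |psi (2 * H) a b (t j.succ) - psi (2 * H) a b (t j.castSucc)|) / 2 := by
            rw [Finset.sum_div]
        _ ≤ 2 * (b - a) ^ (2 * H) := by linarith
    have habs_nonneg : ∀ j ∈ (Finset.univ : Finset (Fin n)),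
        (0:ℝ) ≤ |fbmCov H b (t j.succ) - fbmCov H b (t j.castSucc)
          - fbmCov H a (t j.succ) + fbmCov H a (t j.castSucc)| :=
      fun j _ => abs_nonneg _
    calc ∑ j : Fin n,
          |fbmCov H b (t j.succ) - fbmCov H b (t j.castSucc)
            - fbmCov H a (t j.succ) + fbmCov H a (t j.castSucc)| ^ ρ
        ≤ (∑ j : Fin n,
            |fbmCov H b (t j.succ) - fbmCov H b (t j.castSucc)
              - fbmCov H a (t j.succ) + fbmCov H a (t j.castSucc)|) ^ ρ :=
          sum_rpow_le_rpow_sum hρ1 _ _ habs_nonneg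
      _ ≤ (2 * (b - a) ^ (2 * H)) ^ ρ :=
          Real.rpow_le_rpow (Finset.sum_nonneg habs_nonneg) hsum (by linarith)
      _ = (2:ℝ) ^ ρ * ((b - a) ^ (2 * H)) ^ ρ :=
          Real.mul_rpow (by norm_num) (Real.rpow_nonneg (by linarith) _)
      _ = (2:ℝ) ^ ρ * (b - a) ^ (2 * H * ρ) := by
          rw [← Real.rpow_mul (by linarith : (0:ℝ) ≤ b - a)]
      _ ≤ (2:ℝ) ^ ρ * (b - a) := by
          have hle : (b - a) ^ (2 * H * ρ) ≤ (b - a) ^ (1:ℝ) :=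
            Real.rpow_le_rpow_of_exponent_ge (by linarith) (by linarith) hpρ
          rw [Real.rpow_one] at hle
          exact mul_le_mul_of_nonneg_left hle h2ρ
  calc ∑ i : Fin m, ∑ j : Fin n,
        |fbmCov H (s i.succ) (t j.succ) - fbmCov H (s i.succ) (t j.castSucc)
          - fbmCov H (s i.castSucc) (t j.succ)
          + fbmCov H (s i.castSucc) (t j.castSucc)| ^ ρ
      ≤ ∑ i : Fin m, (2:ℝ) ^ ρ * (s i.succ - s i.castSucc) :=
        Finset.sum_le_sum fun i _ => hrow i
    _ = (2:ℝ) ^ ρ * ∑ i : Fin m, (s i.succ - s i.castSucc) := by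
        rw [Finset.mul_sum]
    _ = (2:ℝ) ^ ρ * (1 - 0) := by rw [fin_telescope s, hs0, hs1]
    _ ≤ (2:ℝ) ^ ρ := by norm_num
end

section
/- (Proposition 2.1, regular regime.) Let H ∈ [1/2,1). Then every rectangular increment of the fractional Brownian covariance is nonnegative: for all 0 ≤ s ≤ t and 0 ≤ u ≤ v one has R(t,v) − R(t,u) − R(s,v) + R(s,u) ≥ 0. Consequently, for all partitions 0 = s_0 < ⋯ < s_m = 1 and 0 = t_0 < ⋯ < t_n = 1 of [0,1], Σ_{i=0}^{m−1} Σ_{j=0}^{n−1} |R(s_{i+1},t_{j+1}) − R(s_{i+1},t_j) − R(s_i,t_{j+1}) + R(s_i,t_j)| = R(1,1) = 1; in particular the two-dimensional 1-variation of R on [0,1]² is finite (and equal to 1). -/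
open scoped BigOperators

open Set in
lemma convexOn_abs_rpow' {p : ℝ} (hp : 1 ≤ p) : ConvexOn ℝ Set.univ (fun x : ℝ => |x| ^ p) := by
  have habs : ConvexOn ℝ Set.univ (fun x : ℝ => |x|) := by
    exact convexOn_univ_norm (E := ℝ)
  have hsub : ((fun x : ℝ => |x|) '' univ) ⊆ Ici (0:ℝ) := by
    rintro y ⟨x, -, rfl⟩; exact abs_nonneg x
  have h1 : ConvexOn ℝ ((fun x : ℝ => |x|) '' univ) (fun x : ℝ => x ^ p) := by
    have : ((fun x : ℝ => |x|) '' univ) = Ici (0:ℝ) := by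
      apply Subset.antisymm hsub
      rintro y (hy : (0:ℝ) ≤ y)
      exact ⟨y, mem_univ _, abs_of_nonneg hy⟩
    rw [this]; exact convexOn_rpow hp
  have hmono : MonotoneOn (fun x : ℝ => x ^ p) ((fun x : ℝ => |x|) '' univ) := by
    rintro y ⟨x, -, rfl⟩ z ⟨w, -, rfl⟩ h
    exact Real.rpow_le_rpow (abs_nonneg x) h (le_trans zero_le_one hp)
  exact h1.comp habs hmono

open Set in
lemma four_point' {f : ℝ → ℝ} (hf : ConvexOn ℝ Set.univ f) {a b c d : ℝ}
    (h1 : a ≤ b) (h3 : b ≤ d) (h4 : c ≤ d) (hsum : b + c = a + d) :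
    f b + f c ≤ f a + f d := by
  rcases eq_or_lt_of_le (h1.trans h3) with h | h
  · have hb : b = a := le_antisymm (h ▸ h3) h1
    have hc : c = d := by linarith
    rw [hb, hc]
  · set θ := (b - a) / (d - a) with hθdef
    have hda : 0 < d - a := by linarith
    have hθ0 : 0 ≤ θ := div_nonneg (by linarith) hda.le
    have hθ1 : θ ≤ 1 := (div_le_one hda).2 (by linarith)
    have key : ∀ x y : ℝ, 0 ≤ x → 0 ≤ y → x + y = 1 → f (x * a + y * d) ≤ x * f a + y * f d := by
      intro x y hx hy hxy
      simpa using hf.2 (mem_univ a) (mem_univ d) hx hy hxy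
    have hb : b = (1 - θ) * a + θ * d := by
      rw [hθdef, show (1 - (b - a) / (d - a)) * a + (b - a) / (d - a) * d = a + (b - a) / (d - a) * (d - a) by ring, div_mul_cancel₀ _ hda.ne']; ring
    have hc : c = θ * a + (1 - θ) * d := by
      have : c = a + d - b := by linarith
      rw [this, hb]; ring
    have k1 := key (1 - θ) θ (by linarith) hθ0 (by ring)
    have k2 := key θ (1 - θ) hθ0 (by linarith) (by ring)
    rw [← hb] at k1; rw [← hc] at k2
    linarith

/-- telescoping sum over `Fin`. -/
lemma fin_telescope : ∀ (n : ℕ) (f : Fin (n + 1) → ℝ),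
    ∑ j : Fin n, (f j.succ - f j.castSucc) = f (Fin.last n) - f 0 := by
  intro n
  induction n with
  | zero => intro f; simp
  | succ n ih =>
      intro f
      rw [Fin.sum_univ_castSucc]
      have h2 : ∑ j : Fin n, (f j.castSucc.succ - f j.castSucc.castSucc)
          = ∑ j : Fin n, ((f ∘ Fin.castSucc) j.succ - (f ∘ Fin.castSucc) j.castSucc) := by
        apply Finset.sum_congr rfl
        intro j _
        rfl
      rw [h2, ih (f ∘ Fin.castSucc)]
      simp [Function.comp, Fin.succ_last]

lemma fbmCov_incr (H : ℝ) (hH0 : 1 / 2 ≤ H) {s t u v : ℝ} (hst : s ≤ t) (huv : u ≤ v) :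
    fbmCov H t v - fbmCov H t u - fbmCov H s v + fbmCov H s u
      = (|u - t| ^ (2*H) + |v - s| ^ (2*H) - |v - t| ^ (2*H) - |u - s| ^ (2*H)) / 2 := by
  simp only [fbmCov]; ring

lemma fbmCov_incr_nonneg (H : ℝ) (hH0 : 1 / 2 ≤ H) {s t u v : ℝ} (hst : s ≤ t) (huv : u ≤ v) :
    0 ≤ fbmCov H t v - fbmCov H t u - fbmCov H s v + fbmCov H s u := by
  rw [fbmCov_incr H hH0 hst huv]
  have hp : 1 ≤ 2 * H := by linarith
  have := four_point' (convexOn_abs_rpow' hp) (a := u - t) (b := u - s) (c := v - t) (d := v - s)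
    (by linarith) (by linarith) (by linarith) (by ring)
  linarith

/-- (Proposition 2.1, regular regime.) For `H ∈ [1/2,1)`: every rectangular increment
of the fBm covariance is nonnegative; `R(1,1) = 1`; and for all pairs of partitions
`0 = s₀ < ⋯ < s_m = 1`, `0 = t₀ < ⋯ < t_n = 1`,
`∑ᵢ∑ⱼ |R(s_{i+1},t_{j+1}) − R(s_{i+1},t_j) − R(s_i,t_{j+1}) + R(s_i,t_j)| = R(1,1) = 1`;
in particular the 2D 1-variation of `R` on `[0,1]²` is finite and equals `1`. -/
theorem fbmCov_2d_one_variation (H : ℝ) (hH0 : 1 / 2 ≤ H) (hH1 : H < 1) :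
    (∀ s t u v : ℝ, 0 ≤ s → s ≤ t → 0 ≤ u → u ≤ v →
      0 ≤ fbmCov H t v - fbmCov H t u - fbmCov H s v + fbmCov H s u) ∧
    fbmCov H 1 1 = 1 ∧
    ∀ (m n : ℕ) (s : Fin (m + 1) → ℝ) (t : Fin (n + 1) → ℝ),
      StrictMono s → s 0 = 0 → s (Fin.last m) = 1 →
      StrictMono t → t 0 = 0 → t (Fin.last n) = 1 →
      ∑ i : Fin m, ∑ j : Fin n,
          |fbmCov H (s i.succ) (t j.succ) - fbmCov H (s i.succ) (t j.castSucc)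
            - fbmCov H (s i.castSucc) (t j.succ)
            + fbmCov H (s i.castSucc) (t j.castSucc)|
        = 1 := by
  have hp0 : (0:ℝ) < 2 * H := by linarith
  have h00 : (0:ℝ) ^ (2 * H) = 0 := Real.zero_rpow hp0.ne'
  have h11 : fbmCov H 1 1 = 1 := by
    simp [fbmCov, Real.one_rpow, h00]
  have hx0 : ∀ x : ℝ, 0 ≤ x → fbmCov H x 0 = 0 := by
    intro x hx
    simp [fbmCov, h00, abs_of_nonpos (by linarith : 0 - x ≤ 0), abs_of_nonneg hx]
  have h0x : ∀ x : ℝ, 0 ≤ x → fbmCov H 0 x = 0 := by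
    intro x hx
    simp [fbmCov, h00, abs_of_nonneg (by linarith : (0:ℝ) ≤ x - 0), abs_of_nonneg hx]
  refine ⟨fun s t u v _ hst _ huv => fbmCov_incr_nonneg H hH0 hst huv, h11, ?_⟩
  intro m n s t hs hs0 hs1 ht ht0 ht1
  have hsmono := hs.monotone
  have htmono := ht.monotone
  have hterm : ∀ (i : Fin m) (j : Fin n),
      |fbmCov H (s i.succ) (t j.succ) - fbmCov H (s i.succ) (t j.castSucc)
        - fbmCov H (s i.castSucc) (t j.succ) + fbmCov H (s i.castSucc) (t j.castSucc)|
      = fbmCov H (s i.succ) (t j.succ) - fbmCov H (s i.succ) (t j.castSucc)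
        - fbmCov H (s i.castSucc) (t j.succ) + fbmCov H (s i.castSucc) (t j.castSucc) := by
    intro i j
    exact abs_of_nonneg (fbmCov_incr_nonneg H hH0
      (hsmono (Fin.castSucc_le_succ i)) (htmono (Fin.castSucc_le_succ j)))
  calc ∑ i : Fin m, ∑ j : Fin n,
          |fbmCov H (s i.succ) (t j.succ) - fbmCov H (s i.succ) (t j.castSucc)
            - fbmCov H (s i.castSucc) (t j.succ) + fbmCov H (s i.castSucc) (t j.castSucc)|
      = ∑ i : Fin m, ((fbmCov H (s i.succ) (t (Fin.last n)) - fbmCov H (s i.castSucc) (t (Fin.last n)))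
          - (fbmCov H (s i.succ) (t 0) - fbmCov H (s i.castSucc) (t 0))) := by
        apply Finset.sum_congr rfl
        intro i _
        rw [Finset.sum_congr rfl (fun j _ => hterm i j)]
        have := fin_telescope n (fun j => fbmCov H (s i.succ) (t j) - fbmCov H (s i.castSucc) (t j))
        rw [← this]
        apply Finset.sum_congr rfl
        intro j _
        ring
    _ = (fbmCov H (s (Fin.last m)) (t (Fin.last n)) - fbmCov H (s (Fin.last m)) (t 0))
          - (fbmCov H (s 0) (t (Fin.last n)) - fbmCov H (s 0) (t 0)) := by
        have := fin_telescope m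
          (fun i => fbmCov H (s i) (t (Fin.last n)) - fbmCov H (s i) (t 0))
        rw [← this]
        apply Finset.sum_congr rfl
        intro i _
        ring
    _ = 1 := by
        rw [hs1, ht1, hs0, ht0, h11, hx0 1 zero_le_one, h0x 1 zero_le_one, hx0 0 le_rfl]
        ring
end

section
/- (Chen's relation / multiplicativity of the signature of a smooth path.) Let d ≥ 1 and let x : [0,1] → ℝ^d be continuously differentiable. Define iterated integrals by x^0_{s,t} = 1 ∈ ℝ and recursively, for m ≥ 1, x^m_{s,t} = ∫_s^t x^{m−1}_{s,r} ⊗ x'(r) dr ∈ (ℝ^d)^{⊗ m}. Then for all 0 ≤ s ≤ u ≤ t ≤ 1 and every m ≥ 0, x^m_{s,t} = Σ_{k=0}^{m} x^k_{s,u} ⊗ x^{m−k}_{u,t}. Equivalently, the truncated signature S_N(x)_{s,t} = 1 + Σ_{m=1}^N x^m_{s,t} ∈ T^N(ℝ^d) is a multiplicative functional: S_N(x)_{s,t} = S_N(x)_{s,u} ⊗ S_N(x)_{u,t}. -/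
open scoped BigOperators
open MeasureTheory Set intervalIntegral

/-- Iterated integrals of a path `x : ℝ → ℝ^d`, written in coordinates: for a word
`I : Fin m → Fin d`, `iterInt d x m I s t` is the coefficient of
`e_{I 0} ⊗ ⋯ ⊗ e_{I (m-1)}` in the level-`m` iterated integral `x^m_{s,t}`, defined
recursively by `x^0_{s,t} = 1` and `x^{m+1}_{s,t} = ∫_s^t x^m_{s,r} ⊗ x'(r) dr`. -/
noncomputable def iterInt (d : ℕ) (x : ℝ → Fin d → ℝ) :
    (m : ℕ) → (Fin m → Fin d) → ℝ → ℝ → ℝ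
  | 0, _, _, _ => 1
  | m + 1, I, s, t =>
      ∫ r in s..t,
        iterInt d x m (fun i => I i.castSucc) s r * deriv (fun u => x u (I (Fin.last m))) r

section aux
variable {d : ℕ} {x : ℝ → Fin d → ℝ}

lemma contD (hx : ContDiffOn ℝ 1 x (Set.Icc 0 1)) (i : Fin d) :
    ContinuousOn (derivWithin (fun u => x u i) (Icc (0:ℝ) 1)) (Icc 0 1) := by
  have hxi : ContDiffOn ℝ 1 (fun u => x u i) (Icc (0:ℝ) 1) := by
    exact ((ContinuousLinearMap.proj i : (Fin d → ℝ) →L[ℝ] ℝ).contDiff.comp_contDiffOn hx)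
  exact hxi.continuousOn_derivWithin (uniqueDiffOn_Icc one_pos) le_rfl

lemma key_intble (hx : ContDiffOn ℝ 1 x (Set.Icc 0 1)) (f : ℝ → ℝ) (hf : ContinuousOn f (Icc (0:ℝ) 1)) (i : Fin d)
    {a b : ℝ} (ha : a ∈ Icc (0:ℝ) 1) (hb : b ∈ Icc (0:ℝ) 1) :
    IntervalIntegrable (fun r => f r * deriv (fun u => x u i) r) volume a b := by
  have hc : ContinuousOn (fun r => f r * derivWithin (fun u => x u i) (Icc (0:ℝ) 1) r)
      (Icc (0:ℝ) 1) := hf.mul (contD hx i)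
  have hsub : uIcc a b ⊆ Icc (0:ℝ) 1 := uIcc_subset_Icc ha hb
  have h1 : IntervalIntegrable (fun r => f r * derivWithin (fun u => x u i) (Icc (0:ℝ) 1) r)
      volume a b := (hc.mono hsub).intervalIntegrable
  refine h1.congr_ae ?_
  have h2 : ∀ᵐ r : ℝ, r ≠ (1:ℝ) := by
    rw [MeasureTheory.ae_iff]
    convert Real.volume_singleton (a := 1) using 2
    ext r; simp
  filter_upwards [ae_restrict_mem measurableSet_uIoc, ae_restrict_of_ae h2] with r hr hne
  have hr' : r ∈ Icc (0:ℝ) 1 := by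
    rcases hr with ⟨h₁, h₂⟩
    constructor
    · exact le_of_lt (lt_of_le_of_lt (le_min ha.1 hb.1) h₁)
    · exact le_trans h₂ (max_le ha.2 hb.2)
  have hro : r ∈ Ioo (0:ℝ) 1 := by
    refine ⟨lt_of_le_of_lt (le_min ha.1 hb.1) hr.1, lt_of_le_of_ne hr'.2 hne⟩
  rw [derivWithin_of_mem_nhds (Icc_mem_nhds hro.1 hro.2)]

lemma iterInt_contOn (hx : ContDiffOn ℝ 1 x (Set.Icc 0 1)) (m : ℕ) (J : Fin m → Fin d) {s : ℝ} (hs : s ∈ Icc (0:ℝ) 1) :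
    ContinuousOn (fun r => iterInt d x m J s r) (Icc 0 1) := by
  induction m with
  | zero => simpa [iterInt] using continuousOn_const
  | succ m ih =>
      have hint : IntervalIntegrable
          (fun r => iterInt d x m (fun i => J i.castSucc) s r *
            deriv (fun u => x u (J (Fin.last m))) r) volume 0 1 :=
        key_intble hx _ (ih _) _ (left_mem_Icc.mpr zero_le_one) (right_mem_Icc.mpr zero_le_one)
      have := continuousOn_primitive_interval' hint (by rwa [uIcc_of_le zero_le_one])
      rw [uIcc_of_le zero_le_one] at this
      exact this

lemma iterInt_cast {m m' : ℕ} (h : m = m') (J : Fin m' → Fin d) (a b : ℝ) :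
    iterInt d x m' J a b = iterInt d x m (fun i => J (Fin.cast h i)) a b := by
  subst h; rfl

lemma chen_aux (hx : ContDiffOn ℝ 1 x (Set.Icc 0 1)) (s u : ℝ) (h0s : 0 ≤ s) (hsu : s ≤ u) (hu1 : u ≤ 1)
    (m : ℕ) :
    ∀ (I : Fin m → Fin d) (t : ℝ), u ≤ t → t ≤ 1 →
    iterInt d x m I s t =
      ∑ k : Fin (m + 1),
        iterInt d x (k : ℕ) (fun i => I (Fin.castLE (Nat.lt_succ_iff.mp k.isLt) i)) s u *
          iterInt d x (m - (k : ℕ))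
            (fun i => I (Fin.cast (Nat.add_sub_cancel' (Nat.lt_succ_iff.mp k.isLt))
              (Fin.natAdd (k : ℕ) i))) u t := by
  have hs : s ∈ Icc (0:ℝ) 1 := ⟨h0s, hsu.trans hu1⟩
  have hu : u ∈ Icc (0:ℝ) 1 := ⟨h0s.trans hsu, hu1⟩
  induction m with
  | zero =>
      intro I t hut ht1
      simp [iterInt, Fin.sum_univ_one]
  | succ m ih =>
      intro I t hut ht1
      have ht : t ∈ Icc (0:ℝ) 1 := ⟨h0s.trans (hsu.trans hut), ht1⟩
      set J : Fin m → Fin d := fun i => I i.castSucc with hJ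
      set g : ℝ → ℝ := fun r => deriv (fun v => x v (I (Fin.last m))) r with hgdef
      have h1 : IntervalIntegrable (fun r => iterInt d x m J s r * g r) volume s u :=
        key_intble hx _ (iterInt_contOn hx m J hs) _ hs hu
      have h2 : IntervalIntegrable (fun r => iterInt d x m J s r * g r) volume u t :=
        key_intble hx _ (iterInt_contOn hx m J hs) _ hu ht
      have hLHS : iterInt d x (m+1) I s t = (∫ r in s..u, iterInt d x m J s r * g r)
          + ∫ r in u..t, iterInt d x m J s r * g r := by
        rw [show iterInt d x (m+1) I s t = ∫ r in s..t, iterInt d x m J s r * g r from rfl,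
          ← intervalIntegral.integral_add_adjacent_intervals h1 h2]
      -- rewrite second integral via IH
      have hIH : ∀ r ∈ uIcc u t,
          iterInt d x m J s r =
          ∑ k : Fin (m + 1),
            iterInt d x (k : ℕ) (fun i => J (Fin.castLE (Nat.lt_succ_iff.mp k.isLt) i)) s u *
              iterInt d x (m - (k : ℕ))
                (fun i => J (Fin.cast (Nat.add_sub_cancel' (Nat.lt_succ_iff.mp k.isLt))
                  (Fin.natAdd (k : ℕ) i))) u r := by
        intro r hr
        rw [uIcc_of_le hut] at hr
        exact ih J r hr.1 (hr.2.trans ht1)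
      have hsecond : (∫ r in u..t, iterInt d x m J s r * g r)
          = ∑ k : Fin (m + 1),
            iterInt d x (k : ℕ) (fun i => J (Fin.castLE (Nat.lt_succ_iff.mp k.isLt) i)) s u *
              ∫ r in u..t, iterInt d x (m - (k : ℕ))
                (fun i => J (Fin.cast (Nat.add_sub_cancel' (Nat.lt_succ_iff.mp k.isLt))
                  (Fin.natAdd (k : ℕ) i))) u r * g r := by
        rw [intervalIntegral.integral_congr (g := fun r =>
          ∑ k : Fin (m + 1),
            iterInt d x (k : ℕ) (fun i => J (Fin.castLE (Nat.lt_succ_iff.mp k.isLt) i)) s u *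
              (iterInt d x (m - (k : ℕ))
                (fun i => J (Fin.cast (Nat.add_sub_cancel' (Nat.lt_succ_iff.mp k.isLt))
                  (Fin.natAdd (k : ℕ) i))) u r * g r))
          (fun r hr => by rw [hIH r hr, Finset.sum_mul]; simp [mul_assoc])]
        rw [intervalIntegral.integral_finset_sum]
        · exact Finset.sum_congr rfl fun k _ => intervalIntegral.integral_const_mul _ _
        · intro k _
          exact (key_intble hx _ (iterInt_contOn hx _ _ hu) _ hu ht).const_mul _
      rw [hLHS, hsecond, Fin.sum_univ_castSucc (n := m + 1), add_comm]
      congr 1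
      · -- sum over k : Fin (m+1) matching
        refine Finset.sum_congr rfl fun k _ => ?_
        have hk : (k : ℕ) ≤ m := Nat.lt_succ_iff.mp k.isLt
        have hcast : (m - (k : ℕ)) + 1 = m + 1 - ((k.castSucc : Fin (m+2)) : ℕ) := by
          simp [Nat.succ_sub hk]
        rw [iterInt_cast hcast]
        congr 1
        simp only [iterInt]
        refine intervalIntegral.integral_congr fun r _ => ?_
        congr 1
        show deriv (fun v => x v (I (Fin.last m))) r = _
        congr 1
        funext v
        congr 1
        congr 1
        ext
        simp
        omega
      · -- last term
        have hw : (fun i1 => I (Fin.castLE (Nat.lt_succ_iff.mp (Fin.last (m+1)).isLt) i1)) = I := rfl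
        have h0 : iterInt d x (m + 1 - ((Fin.last (m+1) : Fin (m+2)) : ℕ))
            (fun i => I (Fin.cast (Nat.add_sub_cancel'
              (Nat.lt_succ_iff.mp (Fin.last (m+1)).isLt))
              (Fin.natAdd ((Fin.last (m+1) : Fin (m+2)) : ℕ) i))) u t = 1 := by
          rw [iterInt_cast (m := 0) (by simp)]
          rfl
        rw [h0, hw, mul_one]
        rfl
  
end aux

/-- Chen's relation (multiplicativity of the signature of a smooth path): for a `C¹`
path `x : [0,1] → ℝ^d`, all `0 ≤ s ≤ u ≤ t ≤ 1`, every level `m` and every word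
`I : Fin m → Fin d`, the coordinate of `x^m_{s,t}` along `I` equals
`∑_{k=0}^m (x^k_{s,u} ⊗ x^{m-k}_{u,t})` in the corresponding coordinates; i.e. the
truncated signature is a multiplicative functional. -/
theorem chen_relation (d : ℕ) (hd : 1 ≤ d) (x : ℝ → Fin d → ℝ)
    (hx : ContDiffOn ℝ 1 x (Set.Icc 0 1))
    (s u t : ℝ) (h0s : 0 ≤ s) (hsu : s ≤ u) (hut : u ≤ t) (ht1 : t ≤ 1)
    (m : ℕ) (I : Fin m → Fin d) :
    iterInt d x m I s t =
      ∑ k : Fin (m + 1),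
        iterInt d x (k : ℕ) (fun i => I (Fin.castLE (Nat.lt_succ_iff.mp k.isLt) i)) s u *
          iterInt d x (m - (k : ℕ))
            (fun i => I (Fin.cast (Nat.add_sub_cancel' (Nat.lt_succ_iff.mp k.isLt))
              (Fin.natAdd (k : ℕ) i))) u t := by
  exact chen_aux hx s u h0s hsu (hut.trans ht1) m I t hut ht1
end
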